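/- arXiv:2501.14545 — 2 statements merged into one kernel-verified Lean document; each statement's English description precedes it below -/
import Mathlib

section
/- For every real x > 0 and every T ≥ 3, the quantity 𝓕(x,T) := Σ_{ρ,ρ' : T<γ,γ'≤2T} x^{ρ−ρ'} W(ρ−ρ'), where W(u) = 4/(4 − u²) and the sums run over pairs of nontrivial zeros ρ = β+iγ, ρ' = β'+iγ' of the Riemann zeta function counted with multiplicity, is a nonnegative real number, and moreover 𝓕(1/x, T) = 𝓕(x, T). -/
open Filter Topology MeasureTheory Set

/-- The multiplicity of `ρ` as a zero of the Riemann zeta function: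
the least `n` such that the `n`-th iterated derivative of `ζ` is nonzero at `ρ`. -/
noncomputable def zetaMult (ρ : ℂ) : ℕ :=
  sInf {n : ℕ | iteratedDeriv n riemannZeta ρ ≠ 0}

/-- `ρ` is a nontrivial zero of the Riemann zeta function. -/
def IsNontrivialZero (ρ : ℂ) : Prop :=
  riemannZeta ρ = 0 ∧ 0 < ρ.re ∧ ρ.re < 1

/-- The set of nontrivial zeros `ρ = β + iγ` with `T < γ ≤ 2T`. -/
def zeroBand (T : ℝ) : Set ℂ :=
  {ρ | IsNontrivialZero ρ ∧ T < ρ.im ∧ ρ.im ≤ 2 * T}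

/-- Number of nontrivial zeros with `T < γ ≤ 2T`, counted with multiplicity. -/
noncomputable def Ntot (T : ℝ) : ℝ :=
  ∑ᶠ ρ ∈ zeroBand T, (zetaMult ρ : ℝ)

/-- Number of simple nontrivial zeros with `T < γ ≤ 2T`. -/
noncomputable def Nsimple (T : ℝ) : ℝ :=
  ∑ᶠ ρ ∈ {ρ ∈ zeroBand T | zetaMult ρ = 1}, (1 : ℝ)

/-- Number of nontrivial zeros with `T < γ ≤ 2T` on the critical line, with multiplicity. -/
noncomputable def Nline (T : ℝ) : ℝ :=
  ∑ᶠ ρ ∈ {ρ ∈ zeroBand T | ρ.re = 1/2}, (zetaMult ρ : ℝ)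

/-- Number of simple critical-line nontrivial zeros with `T < γ ≤ 2T`. -/
noncomputable def NlineSimple (T : ℝ) : ℝ :=
  ∑ᶠ ρ ∈ {ρ ∈ zeroBand T | ρ.re = 1/2 ∧ zetaMult ρ = 1}, (1 : ℝ)

/-- The weight `W(u) = 4/(4 - u²)`. -/
noncomputable def Wweight (u : ℂ) : ℂ := 4 / (4 - u ^ 2)

/-- `𝓕(x,T) = Σ_{ρ,ρ' : T<γ,γ'≤2T} x^{ρ-ρ'} W(ρ-ρ')`, pairs of nontrivial zeros
counted with multiplicity. -/
noncomputable def FF (x T : ℝ) : ℂ :=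
  ∑ᶠ ρ ∈ zeroBand T, ∑ᶠ ρ' ∈ zeroBand T,
    (zetaMult ρ : ℂ) * (zetaMult ρ' : ℂ) * (x : ℂ) ^ (ρ - ρ') * Wweight (ρ - ρ')



section AuxBasic
open Complex

lemma zetaAnalyticOn : AnalyticOnNhd ℂ riemannZeta {s : ℂ | s ≠ 1} := by
  intro z hz
  have hdo : DifferentiableOn ℂ riemannZeta {s : ℂ | s ≠ 1} :=
    fun w hw => (differentiableAt_riemannZeta hw).differentiableWithinAt
  exact hdo.analyticAt (isOpen_ne.mem_nhds hz)

lemma conj_ne_one {w : ℂ} (hw : w ≠ 1) : (starRingEnd ℂ) w ≠ 1 := fun h =>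
  hw (by simpa using congrArg (starRingEnd ℂ) h)

lemma hasDerivAt_conj_conj {f : ℂ → ℂ} {f' z : ℂ} (h : HasDerivAt f f' ((starRingEnd ℂ) z)) :
    HasDerivAt (fun w => (starRingEnd ℂ) (f ((starRingEnd ℂ) w))) ((starRingEnd ℂ) f') z := by
  rw [hasDerivAt_iff_tendsto_slope] at h ⊢
  have hmaps : Set.MapsTo (starRingEnd ℂ) {z}ᶜ {(starRingEnd ℂ) z}ᶜ := by
    intro w hw hw'
    exact hw (by simpa using congrArg (starRingEnd ℂ) hw')
  have h1 : Filter.Tendsto (starRingEnd ℂ) (𝓝[≠] z) (𝓝[≠] ((starRingEnd ℂ) z)) :=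
    (Complex.continuous_conj.continuousWithinAt).tendsto_nhdsWithin hmaps
  have h2 := (Complex.continuous_conj.tendsto f').comp (h.comp h1)
  refine h2.congr' ?_
  filter_upwards [self_mem_nhdsWithin] with w hw
  show (starRingEnd ℂ) (slope f ((starRingEnd ℂ) z) ((starRingEnd ℂ) w))
      = slope (fun w => (starRingEnd ℂ) (f ((starRingEnd ℂ) w))) z w
  rw [slope_def_field, slope_def_field, map_div₀, map_sub, map_sub, Complex.conj_conj,
    Complex.conj_conj]

lemma deriv_conj_conj' {f : ℂ → ℂ} {z : ℂ} (hf : DifferentiableAt ℂ f ((starRingEnd ℂ) z)) :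
    deriv (fun w => (starRingEnd ℂ) (f ((starRingEnd ℂ) w))) z
      = (starRingEnd ℂ) (deriv f ((starRingEnd ℂ) z)) :=
  (hasDerivAt_conj_conj hf.hasDerivAt).deriv

lemma ne_one_preconnected : IsPreconnected {s : ℂ | s ≠ 1} := by
  have h := (isConnected_compl_singleton_of_one_lt_rank
    (Complex.rank_real_complex ▸ by norm_num) (1 : ℂ)).isPreconnected
  exact h

lemma riemannZeta_conj' {s : ℂ} (hs : s ≠ 1) :
    riemannZeta ((starRingEnd ℂ) s) = (starRingEnd ℂ) (riemannZeta s) := by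
  have hg : AnalyticOnNhd ℂ (fun u => (starRingEnd ℂ) (riemannZeta ((starRingEnd ℂ) u)))
      {s : ℂ | s ≠ 1} := by
    intro z hz
    have hdo : DifferentiableOn ℂ (fun u => (starRingEnd ℂ) (riemannZeta ((starRingEnd ℂ) u)))
        {s : ℂ | s ≠ 1} := by
      intro w hw
      exact (hasDerivAt_conj_conj
        (differentiableAt_riemannZeta (conj_ne_one hw)).hasDerivAt).differentiableAt.differentiableWithinAt
    exact hdo.analyticAt (isOpen_ne.mem_nhds hz)
  have heq : (fun u => (starRingEnd ℂ) (riemannZeta ((starRingEnd ℂ) u))) =ᶠ[𝓝 (2:ℂ)]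
      riemannZeta := by
    have hmem : {w : ℂ | 1 < w.re} ∈ 𝓝 (2 : ℂ) :=
      (isOpen_lt continuous_const Complex.continuous_re).mem_nhds (by norm_num)
    filter_upwards [hmem] with w hw
    have hw' : 1 < ((starRingEnd ℂ) w).re := by simpa using hw
    show (starRingEnd ℂ) (riemannZeta ((starRingEnd ℂ) w)) = riemannZeta w
    rw [zeta_eq_tsum_one_div_nat_add_one_cpow hw', zeta_eq_tsum_one_div_nat_add_one_cpow hw]
    have hmap : (starRingEnd ℂ) (∑' (n : ℕ), 1 / ((n : ℂ) + 1) ^ ((starRingEnd ℂ) w))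
        = ∑' (n : ℕ), (starRingEnd ℂ) (1 / ((n : ℂ) + 1) ^ ((starRingEnd ℂ) w)) := by
      simpa only [Complex.conjCLE_apply] using
        Complex.conjCLE.map_tsum (f := fun n : ℕ => 1 / ((n : ℂ) + 1) ^ ((starRingEnd ℂ) w))
    rw [hmap]
    refine tsum_congr fun n => ?_
    rw [map_div₀, map_one]
    congr 1
    have harg : ((n : ℂ) + 1).arg ≠ Real.pi := by
      have : ((n : ℂ) + 1) = ((n + 1 : ℕ) : ℂ) := by push_cast; ring
      rw [this, Complex.natCast_arg]
      exact Real.pi_ne_zero.symm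
    have hcc : ((starRingEnd ℂ) ((n : ℂ) + 1)) = ((n : ℂ) + 1) := by
      rw [map_add, map_one, map_natCast]
    rw [Complex.cpow_conj _ _ harg, hcc, Complex.conj_conj]
  have hEq := hg.eqOn_of_preconnected_of_eventuallyEq zetaAnalyticOn ne_one_preconnected
    (show (2:ℂ) ∈ {s : ℂ | s ≠ 1} by norm_num) heq
  have h2 := hEq (show s ∈ {s : ℂ | s ≠ 1} from hs)
  calc riemannZeta ((starRingEnd ℂ) s)
      = (starRingEnd ℂ) ((starRingEnd ℂ) (riemannZeta ((starRingEnd ℂ) s))) := by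
        rw [Complex.conj_conj]
    _ = (starRingEnd ℂ) (riemannZeta s) := by rw [show (starRingEnd ℂ)
        (riemannZeta ((starRingEnd ℂ) s)) = riemannZeta s from h2]

lemma iteratedDeriv_zeta_conj (n : ℕ) : ∀ {s : ℂ}, s ≠ 1 →
    iteratedDeriv n riemannZeta ((starRingEnd ℂ) s)
      = (starRingEnd ℂ) (iteratedDeriv n riemannZeta s) := by
  induction n with
  | zero => intro s hs; simpa using riemannZeta_conj' hs
  | succ n ih =>
    intro s hs
    have hs' : (starRingEnd ℂ) s ≠ 1 := conj_ne_one hs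
    have hD : AnalyticOnNhd ℂ (iteratedDeriv n riemannZeta) {w : ℂ | w ≠ 1} := by
      have h := zetaAnalyticOn.iterated_deriv n
      rwa [← iteratedDeriv_eq_iterate] at h
    have hDE : iteratedDeriv n riemannZeta =ᶠ[𝓝 s]
        (fun w => (starRingEnd ℂ) (iteratedDeriv n riemannZeta ((starRingEnd ℂ) w))) := by
      filter_upwards [isOpen_ne.mem_nhds hs] with w hw
      rw [ih hw, Complex.conj_conj]
    rw [iteratedDeriv_succ]
    rw [hDE.deriv_eq, deriv_conj_conj' ((hD _ hs').differentiableAt), Complex.conj_conj]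

end AuxBasic

lemma iteratedDeriv_zero_fun (n : ℕ) (z : ℂ) : iteratedDeriv n (fun _ : ℂ => (0:ℂ)) z = 0 := by
  induction n generalizing z with
  | zero => simp
  | succ n ih =>
    rw [iteratedDeriv_succ']
    simp only [deriv_const']
    exact ih z

lemma nat_sInf_eq {S : Set ℕ} {n : ℕ} (h1 : n ∈ S) (h2 : ∀ k, k < n → k ∉ S) : sInf S = n := by
  have hle : sInf S ≤ n := Nat.sInf_le h1
  rcases lt_or_eq_of_le hle with h | h
  · exact absurd (Nat.sInf_mem ⟨n, h1⟩) (h2 _ h)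
  · exact h

lemma analyticAt_deriv' {h : ℂ → ℂ} {z : ℂ} (hh : AnalyticAt ℂ h z) :
    AnalyticAt ℂ (deriv h) z := by
  obtain ⟨U, hU1, hU2, hU3⟩ := mem_nhds_iff.mp hh.eventually_analyticAt
  exact (AnalyticOnNhd.deriv (fun w hw => hU1 hw)) z hU3

lemma iteratedDeriv_factor : ∀ (n : ℕ) (f h : ℂ → ℂ) (z : ℂ), AnalyticAt ℂ h z → h z ≠ 0 →
    (∀ᶠ w in 𝓝 z, f w = (w - z) ^ n * h w) →
    (∀ k, k < n → iteratedDeriv k f z = 0) ∧ iteratedDeriv n f z ≠ 0 := by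
  intro n
  induction n with
  | zero =>
    intro f h z hh hz heq
    refine ⟨fun k hk => absurd hk (Nat.not_lt_zero k), ?_⟩
    simp only [iteratedDeriv_zero]
    rw [heq.self_of_nhds]
    simpa using hz
  | succ n ih =>
    intro f h z hh hz heq
    have hh' : AnalyticAt ℂ (deriv h) z := analyticAt_deriv' hh
    set h₁ : ℂ → ℂ := fun w => ((n:ℂ)+1) * h w + (w - z) * deriv h w with hh₁def
    have hh₁ : AnalyticAt ℂ h₁ z :=
      (analyticAt_const.mul hh).add ((analyticAt_id.sub analyticAt_const).mul hh')
    have hz₁ : h₁ z ≠ 0 := by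
      simp only [hh₁def, sub_self, zero_mul, add_zero]
      exact mul_ne_zero (by exact_mod_cast (Nat.cast_add_one_ne_zero n : ((n:ℝ)+1) ≠ 0)) hz
    have heq' : ∀ᶠ w in 𝓝 z, deriv f w = (w - z) ^ n * h₁ w := by
      filter_upwards [heq.eventually_nhds, hh.eventually_analyticAt] with w hw hwa
      have hp : HasDerivAt (fun u : ℂ => (u - z)^(n+1)) (((n:ℂ)+1) * (w - z)^n) w := by
        have h0 := ((hasDerivAt_id w).sub_const z).pow (n+1)
        have e : ((n:ℂ)+1) * (w - z)^n = ↑(n+1) * (w - z) ^ (n + 1 - 1) * 1 := by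
          push_cast; ring
        rw [e]
        exact h0
      have hfd : HasDerivAt (fun u => (u - z)^(n+1) * h u)
          (((n:ℂ)+1) * (w - z)^n * h w + (w - z)^(n+1) * deriv h w) w :=
        hp.mul hwa.differentiableAt.hasDerivAt
      rw [Filter.EventuallyEq.deriv_eq hw, hfd.deriv]
      simp only [hh₁def]
      ring
    obtain ⟨IH1, IH2⟩ := ih (deriv f) h₁ z hh₁ hz₁ heq'
    constructor
    · intro k hk
      match k with
      | 0 =>
        simp only [iteratedDeriv_zero]
        rw [heq.self_of_nhds]
        simp
      | (k+1) =>
        rw [iteratedDeriv_succ']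
        exact IH1 k (by omega)
    · rw [iteratedDeriv_succ']
      exact IH2

lemma sInf_iteratedDeriv_unit_mul {f Φ g : ℂ → ℂ} {z : ℂ} (hf : AnalyticAt ℂ f z)
    (hΦ : AnalyticAt ℂ Φ z) (hΦ0 : Φ z ≠ 0) (hfg : ∀ᶠ w in 𝓝 z, g w = Φ w * f w) :
    sInf {n | iteratedDeriv n g z ≠ 0} = sInf {n | iteratedDeriv n f z ≠ 0} := by
  by_cases hzero : ∀ᶠ w in 𝓝 z, f w = 0
  · have hgzero : ∀ᶠ w in 𝓝 z, g w = 0 := by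
      filter_upwards [hfg, hzero] with w h1 h2
      rw [h1, h2, mul_zero]
    have e1 : ∀ n, iteratedDeriv n f z = 0 := fun n => by
      rw [Filter.EventuallyEq.iteratedDeriv_eq n (hzero : f =ᶠ[𝓝 z] fun _ => 0)]
      exact iteratedDeriv_zero_fun n z
    have e2 : ∀ n, iteratedDeriv n g z = 0 := fun n => by
      rw [Filter.EventuallyEq.iteratedDeriv_eq n (hgzero : g =ᶠ[𝓝 z] fun _ => 0)]
      exact iteratedDeriv_zero_fun n z
    simp [e1, e2]
  · obtain ⟨n, h, hh, hh0, hfac⟩ := hf.exists_eventuallyEq_pow_smul_nonzero_iff.mpr hzero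
    have hfac' : ∀ᶠ w in 𝓝 z, f w = (w - z) ^ n * h w := by
      simpa [smul_eq_mul] using hfac
    have Ff := iteratedDeriv_factor n f h z hh hh0 hfac'
    have Fg := iteratedDeriv_factor n g (fun w => Φ w * h w) z (hΦ.mul hh)
      (mul_ne_zero hΦ0 hh0)
      (by filter_upwards [hfg, hfac'] with w h1 h2; rw [h1, h2]; ring)
    have hA : sInf {n | iteratedDeriv n g z ≠ 0} = n :=
      nat_sInf_eq (Fg.2 : _ ∈ {n | iteratedDeriv n g z ≠ 0})
        (fun k hk (hmem : iteratedDeriv k g z ≠ 0) => hmem (Fg.1 k hk))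
    have hB : sInf {n | iteratedDeriv n f z ≠ 0} = n :=
      nat_sInf_eq (Ff.2 : _ ∈ {n | iteratedDeriv n f z ≠ 0})
        (fun k hk (hmem : iteratedDeriv k f z ≠ 0) => hmem (Ff.1 k hk))
    rw [hA, hB]

section AuxMult
open Complex

lemma zetaMult_conj {s : ℂ} (hs : s ≠ 1) : zetaMult ((starRingEnd ℂ) s) = zetaMult s := by
  unfold zetaMult
  congr 1
  ext n
  simp only [Set.mem_setOf_eq]
  rw [iteratedDeriv_zeta_conj n hs]
  exact not_congr (map_eq_zero _)

lemma im_ne_zero_facts {w : ℂ} (hw : w.im ≠ 0) : (∀ n : ℕ, w ≠ -n) ∧ w ≠ 1 := by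
  constructor
  · intro n h
    rw [h] at hw
    simp at hw
  · intro h
    rw [h] at hw
    simp at hw

lemma isOpen_im_ne_zero : IsOpen {w : ℂ | w.im ≠ 0} :=
  isOpen_compl_singleton.preimage Complex.continuous_im

lemma zetaMult_one_sub {s : ℂ} (hs : s.im ≠ 0) : zetaMult (1 - s) = zetaMult s := by
  obtain ⟨hsn, hs1⟩ := im_ne_zero_facts hs
  have hIt : ∀ n (w : ℂ), iteratedDeriv n (fun u => riemannZeta (1 - u)) w
      = (-1 : ℂ)^n • iteratedDeriv n riemannZeta (1 - w) := by
    intro n w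
    calc iteratedDeriv n (fun u => riemannZeta (1 - u)) w
        = iteratedDeriv n (fun u => riemannZeta (1 + -u)) w := by
          simp only [sub_eq_add_neg]
      _ = (-1:ℂ)^n • iteratedDeriv n (fun v => riemannZeta (1 + v)) (-w) :=
          iteratedDeriv_comp_neg n (fun v => riemannZeta (1 + v)) w
      _ = (-1:ℂ)^n • iteratedDeriv n riemannZeta (1 + -w) := by
          rw [iteratedDeriv_comp_const_add]
      _ = (-1:ℂ)^n • iteratedDeriv n riemannZeta (1 - w) := by rw [← sub_eq_add_neg]
  have hset : {n | iteratedDeriv n riemannZeta (1 - s) ≠ 0}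
      = {n | iteratedDeriv n (fun u => riemannZeta (1 - u)) s ≠ 0} := by
    ext n
    simp only [Set.mem_setOf_eq, hIt n s, smul_eq_mul, mul_ne_zero_iff]
    constructor
    · intro h
      exact ⟨pow_ne_zero n (by norm_num), h⟩
    · exact fun h => h.2
  have hπ0 : (2 * (Real.pi : ℂ)) ≠ 0 := by
    simp [Real.pi_ne_zero]
  set Φ : ℂ → ℂ := fun w =>
    2 * Complex.exp (Complex.log (2 * (Real.pi : ℂ)) * (-w)) * Complex.Gamma w
      * Complex.cos ((Real.pi : ℂ) * w / 2) with hΦdef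
  have hmem : {w : ℂ | w.im ≠ 0} ∈ 𝓝 s := isOpen_im_ne_zero.mem_nhds hs
  have hev : ∀ᶠ w in 𝓝 s, (fun u => riemannZeta (1 - u)) w = Φ w * riemannZeta w := by
    filter_upwards [hmem] with w hw
    obtain ⟨hw1, hw2⟩ := im_ne_zero_facts hw
    show riemannZeta (1 - w) = Φ w * riemannZeta w
    rw [riemannZeta_one_sub hw1 hw2, hΦdef]
    rw [Complex.cpow_def_of_ne_zero hπ0]
  have hΦa : AnalyticAt ℂ Φ s := by
    have hd : DifferentiableOn ℂ Φ {w : ℂ | w.im ≠ 0} := by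
      intro w hw
      apply DifferentiableAt.differentiableWithinAt
      have d1 : DifferentiableAt ℂ
          (fun w : ℂ => 2 * Complex.exp (Complex.log (2 * (Real.pi : ℂ)) * (-w))) w :=
        (Complex.differentiable_exp.comp
          ((differentiable_id.neg).const_mul _)).differentiableAt.const_mul 2
      have d2 : DifferentiableAt ℂ Complex.Gamma w :=
        Complex.differentiableAt_Gamma w (im_ne_zero_facts hw).1
      have d3 : DifferentiableAt ℂ (fun w : ℂ => Complex.cos ((Real.pi : ℂ) * w / 2)) w :=
        (Complex.differentiable_cos.comp
          ((differentiable_id.const_mul ((Real.pi : ℂ))).div_const 2)).differentiableAt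
      exact (d1.mul d2).mul d3
    exact hd.analyticAt (isOpen_im_ne_zero.mem_nhds hs)
  have hΦ0 : Φ s ≠ 0 := by
    have hcos : Complex.cos ((Real.pi : ℂ) * s / 2) ≠ 0 := by
      intro h
      obtain ⟨k, hk⟩ := Complex.cos_eq_zero_iff.mp h
      apply hs
      have hπne : (Real.pi:ℂ) ≠ 0 := by exact_mod_cast Real.pi_ne_zero
      have h2 : (Real.pi:ℂ) * s = (2*(k:ℂ)+1) * (Real.pi:ℂ) := by
        have h3 := congrArg (fun z => z * 2) hk
        simpa [div_mul_cancel₀] using h3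
      have hseq : s = (2 * (k:ℂ) + 1) := by
        calc s = ((Real.pi:ℂ) * s) / (Real.pi:ℂ) := by field_simp
        _ = (2*(k:ℂ)+1) := by rw [h2]; field_simp
      rw [hseq]
      simp
    refine mul_ne_zero (mul_ne_zero (mul_ne_zero two_ne_zero (Complex.exp_ne_zero _)) ?_) hcos
    exact Complex.Gamma_ne_zero hsn
  unfold zetaMult
  rw [hset]
  exact sInf_iteratedDeriv_unit_mul (zetaAnalyticOn s hs1) hΦa hΦ0 hev

end AuxMult

section AuxBand
open Complex

lemma zeroBand_sigma {T : ℝ} (hT : 0 < T) {ρ : ℂ} (hρ : ρ ∈ zeroBand T) :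
    (1 - (starRingEnd ℂ) ρ) ∈ zeroBand T ∧ zetaMult (1 - (starRingEnd ℂ) ρ) = zetaMult ρ := by
  obtain ⟨⟨hz, hre0, hre1⟩, him1, him2⟩ := hρ
  have him : 0 < ρ.im := lt_trans hT him1
  have himne : ρ.im ≠ 0 := ne_of_gt him
  have hρ1 : ρ ≠ 1 := fun h => by rw [h] at himne; simp at himne
  have hcim : ((starRingEnd ℂ) ρ).im ≠ 0 := by simpa using himne
  obtain ⟨hc1, hc2⟩ := im_ne_zero_facts hcim
  constructor
  · refine ⟨⟨?_, ?_, ?_⟩, ?_, ?_⟩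
    · rw [riemannZeta_one_sub hc1 hc2, riemannZeta_conj' hρ1, hz, map_zero, mul_zero]
    · simp only [Complex.sub_re, Complex.one_re, Complex.conj_re]
      linarith
    · simp only [Complex.sub_re, Complex.one_re, Complex.conj_re]
      linarith
    · simp only [Complex.sub_im, Complex.one_im, Complex.conj_im]
      simpa using him1
    · simp only [Complex.sub_im, Complex.one_im, Complex.conj_im]
      simpa using him2
  · have e1 : (1 : ℂ) - (starRingEnd ℂ) ρ = (starRingEnd ℂ) (1 - ρ) := by
      rw [map_sub, map_one]
    have hne1 : (1 : ℂ) - ρ ≠ 1 := by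
      intro h
      have : ρ = 0 := by linear_combination -h
      rw [this] at himne
      simp at himne
    rw [e1, zetaMult_conj hne1, zetaMult_one_sub himne]

lemma zeroBand_finite {T : ℝ} (hT : 3 ≤ T) : (zeroBand T).Finite := by
  have hT0 : (0:ℝ) < T := by linarith
  set B : Set ℂ := {z : ℂ | z.re ∈ Set.Icc (0:ℝ) 1} ∩ {z : ℂ | z.im ∈ Set.Icc T (2*T)} with hBdef
  set K : Set ℂ := B ∩ {z : ℂ | riemannZeta z = 0} with hKdef
  have hsub : zeroBand T ⊆ K := by
    intro ρ hρ
    exact ⟨⟨⟨hρ.1.2.1.le, hρ.1.2.2.le⟩, ⟨hρ.2.1.le, hρ.2.2⟩⟩, hρ.1.1⟩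
  refine Set.Finite.subset ?_ hsub
  have hBclosed : IsClosed B :=
    (isClosed_Icc.preimage Complex.continuous_re).inter
      (isClosed_Icc.preimage Complex.continuous_im)
  have hKne1 : ∀ z ∈ K, z ≠ 1 := by
    intro z hz h
    rw [h] at hz
    have h1 := hz.1.2.1
    simp only [Complex.one_im] at h1
    linarith
  have hKB : K ⊆ B := fun z hz => hz.1
  have hKclosed : IsClosed K := by
    refine isClosed_of_closure_subset fun z hz => ?_
    have hzB : z ∈ B := hBclosed.closure_subset ((closure_mono hKB) hz)
    have hz1 : z ≠ 1 := by
      intro h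
      rw [h] at hzB
      have h1 := hzB.2.1
      simp only [Set.mem_setOf_eq, Complex.one_im, Set.mem_Icc] at h1
      linarith
    have hzero : riemannZeta z = 0 := by
      have hne : (𝓝[K] z).NeBot := mem_closure_iff_nhdsWithin_neBot.mp hz
      have h1 : Filter.Tendsto riemannZeta (𝓝[K] z) (𝓝 (riemannZeta z)) :=
        ((differentiableAt_riemannZeta hz1).continuousAt.tendsto).mono_left nhdsWithin_le_nhds
      have h2 : Filter.Tendsto riemannZeta (𝓝[K] z) (𝓝 0) := by
        refine Filter.Tendsto.congr' ?_ tendsto_const_nhds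
        filter_upwards [self_mem_nhdsWithin] with w hw
        exact hw.2.symm
      exact tendsto_nhds_unique h1 h2
    exact ⟨hzB, hzero⟩
  have hKbdd : Bornology.IsBounded K := by
    refine (Metric.isBounded_closedBall (x := (0:ℂ)) (r := 1 + 2*T)).subset fun z hz => ?_
    have h1 : |z.re| ≤ 1 := abs_le.mpr ⟨by linarith [hz.1.1.1], hz.1.1.2⟩
    have h2 : |z.im| ≤ 2*T := abs_le.mpr ⟨by linarith [hz.1.2.1], hz.1.2.2⟩
    simp only [Metric.mem_closedBall, dist_zero_right]
    calc ‖z‖ ≤ |z.re| + |z.im| := Complex.norm_le_abs_re_add_abs_im z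
      _ ≤ 1 + 2*T := by linarith
  have hKcomp : IsCompact K := Metric.isCompact_of_isClosed_isBounded hKclosed hKbdd
  have hdis : ∀ z ∈ K, ∀ᶠ w in 𝓝[≠] z, riemannZeta w ≠ 0 := by
    intro z hz
    rcases (zetaAnalyticOn z (hKne1 z hz)).eventually_eq_zero_or_eventually_ne_zero with h | h
    · exfalso
      have hEq := zetaAnalyticOn.eqOn_zero_of_preconnected_of_eventuallyEq_zero
        ne_one_preconnected (show z ∈ {s : ℂ | s ≠ 1} from hKne1 z hz) h
      exact riemannZeta_ne_zero_of_one_lt_re (by norm_num : 1 < (2:ℂ).re)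
        (hEq (show (2:ℂ) ∈ {s : ℂ | s ≠ 1} by norm_num))
    · exact h
  have hdt : DiscreteTopology ↥K := by
    rw [discreteTopology_subtype_iff]
    intro z hz
    rw [← Filter.empty_mem_iff_bot]
    have h1 : {w : ℂ | riemannZeta w ≠ 0} ∈ 𝓝[≠] z ⊓ 𝓟 K :=
      Filter.mem_inf_of_left (hdis z hz)
    have h2 : K ∈ 𝓝[≠] z ⊓ 𝓟 K := Filter.mem_inf_of_right (Filter.mem_principal_self K)
    have h3 : {w : ℂ | riemannZeta w ≠ 0} ∩ K ⊆ ∅ := by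
      intro w hw
      exact absurd hw.2.2 hw.1
    exact Filter.mem_of_superset (Filter.inter_mem h1 h2) h3
  exact hKcomp.finite (isDiscrete_iff_discreteTopology.mpr hdt)

end AuxBand

section AuxIntegral
open Complex

lemma cexp_integrableOn_Ioi {c : ℂ} (hc : c.re < 0) (b : ℝ) :
    MeasureTheory.IntegrableOn (fun v : ℝ => Complex.exp (c * v)) (Set.Ioi b) := by
  have hmeas : MeasureTheory.AEStronglyMeasurable (fun v : ℝ => Complex.exp (c * v))
      (MeasureTheory.volume.restrict (Set.Ioi b)) :=
    (Complex.continuous_exp.comp (continuous_const.mul Complex.continuous_ofReal)).aestronglyMeasurable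
  refine MeasureTheory.Integrable.mono' (exp_neg_integrableOn_Ioi b (neg_pos.mpr hc)) hmeas ?_
  refine Filter.Eventually.of_forall fun v => ?_
  have h1 : (c * (v:ℂ)).re = c.re * v := by
    simp [Complex.mul_re]
  have h2 : - -c.re * v = c.re * v := by ring
  rw [Complex.norm_exp, h1, h2]

lemma cexp_integral_Ioi {c : ℂ} (hc : c.re < 0) (b : ℝ) :
    ∫ v in Set.Ioi b, Complex.exp (c * v) = -Complex.exp (c * b) / c := by
  have hc0 : c ≠ 0 := fun h => by rw [h] at hc; simp at hc
  have hder : ∀ v : ℝ, HasDerivAt (fun v : ℝ => Complex.exp (c * v) / c)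
      (Complex.exp (c * v)) v := by
    intro v
    have h2 : HasDerivAt (fun z : ℂ => c * z) c ((v:ℝ):ℂ) := by
      simpa using (hasDerivAt_id ((v:ℝ):ℂ)).const_mul c
    have h3 := (Complex.hasDerivAt_exp (c * v)).comp ((v:ℝ):ℂ) h2
    have h4 := h3.div_const c
    have h5 : Complex.exp (c * v) * c / c = Complex.exp (c * v) :=
      mul_div_cancel_right₀ _ hc0
    rw [h5] at h4
    exact h4.comp_ofReal
  have htend : Filter.Tendsto (fun v : ℝ => Complex.exp (c * v) / c) Filter.atTop (𝓝 0) := by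
    rw [tendsto_zero_iff_norm_tendsto_zero]
    have h1 : Filter.Tendsto (fun v : ℝ => c.re * v) Filter.atTop Filter.atBot :=
      Filter.Tendsto.const_mul_atTop_of_neg hc Filter.tendsto_id
    have h2 := (Real.tendsto_exp_atBot.comp h1).div_const ‖c‖
    rw [zero_div] at h2
    refine h2.congr fun v => ?_
    have h3 : (c * (v:ℂ)).re = c.re * v := by simp [Complex.mul_re]
    simp [Function.comp, Complex.norm_exp, h3]
  have h := MeasureTheory.integral_Ioi_of_hasDerivAt_of_tendsto'
    (fun v _ => hder v) (cexp_integrableOn_Ioi hc b) htend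
  rw [h, zero_sub, neg_div]

lemma integrableOn_comp_neg_Iic {f : ℝ → ℂ} {b : ℝ}
    (hf : MeasureTheory.IntegrableOn f (Set.Ioi (-b))) :
    MeasureTheory.IntegrableOn (fun v => f (-v)) (Set.Iic b) := by
  have m : MeasurableEmbedding fun x : ℝ => -x := (Homeomorph.neg ℝ).measurableEmbedding
  rw [MeasureTheory.IntegrableOn, ← MeasureTheory.Measure.map_neg_eq_self
    (MeasureTheory.volume : MeasureTheory.Measure ℝ)]
  rw [show MeasureTheory.Integrable (fun v => f (-v))
      ((MeasureTheory.Measure.map Neg.neg MeasureTheory.volume).restrict (Set.Iic b))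
    ↔ MeasureTheory.IntegrableOn (fun v => f (-v)) (Set.Iic b)
      (MeasureTheory.Measure.map Neg.neg MeasureTheory.volume) from Iff.rfl]
  rw [m.integrableOn_map_iff]
  have he : ((fun v => f (-v)) ∘ fun x : ℝ => -x) = f := by
    funext v; simp
  rw [he]
  have hp : (fun x : ℝ => -x) ⁻¹' Set.Iic b = Set.Ici (-b) := by
    ext w; simp [neg_le]
  rw [hp]
  exact Iff.mpr integrableOn_Ici_iff_integrableOn_Ioi hf

lemma cexp_integrableOn_Iic {c : ℂ} (hc : 0 < c.re) (b : ℝ) :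
    MeasureTheory.IntegrableOn (fun v : ℝ => Complex.exp (c * v)) (Set.Iic b) := by
  have h := cexp_integrableOn_Ioi (c := -c) (by simpa using hc) (-b)
  have h2 := integrableOn_comp_neg_Iic (b := b) h
  refine h2.congr_fun (fun v _ => ?_) measurableSet_Iic
  show Complex.exp (-c * ((-v : ℝ):ℂ)) = Complex.exp (c * v)
  congr 1
  push_cast
  ring

lemma cexp_integral_Iic {c : ℂ} (hc : 0 < c.re) (b : ℝ) :
    ∫ v in Set.Iic b, Complex.exp (c * v) = Complex.exp (c * b) / c := by
  have h := cexp_integral_Ioi (c := -c) (by simpa using hc) (-b)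
  rw [← integral_comp_neg_Iic b (fun u : ℝ => Complex.exp (-c * u))] at h
  have e1 : ∀ v : ℝ, Complex.exp (-c * ((-v : ℝ):ℂ)) = Complex.exp (c * v) := by
    intro v; congr 1; push_cast; ring
  simp_rw [e1] at h
  rw [h, neg_div_neg_eq]

end AuxIntegral

section AuxKey
open Complex

lemma key_integral {x : ℝ} (hx : 0 < x) {a : ℂ} (ha : |a.re| < 2) :
    MeasureTheory.Integrable
      (fun v : ℝ => (Real.exp (-2 * |v - Real.log x|) : ℂ) * Complex.exp (a * v)) ∧
    ∫ v : ℝ, (Real.exp (-2 * |v - Real.log x|) : ℂ) * Complex.exp (a * v)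
      = (x:ℂ) ^ a * Wweight a := by
  set L := Real.log x with hL
  obtain ⟨ha1, ha2⟩ := abs_lt.mp ha
  set g : ℝ → ℂ := fun v => (Real.exp (-2 * |v - L|) : ℂ) * Complex.exp (a * v) with hg
  have h2a : 0 < (a + 2).re := by simp [Complex.add_re]; linarith
  have h2b : (a - 2).re < 0 := by simp [Complex.sub_re]; linarith
  have ha2ne : a + 2 ≠ 0 := fun h => by
    have := congrArg Complex.re h; simp [Complex.add_re] at this; linarith
  have ha2ne' : (2:ℂ) - a ≠ 0 := fun h => by
    have := congrArg Complex.re h; simp [Complex.sub_re] at this; linarith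
  have hIic : ∀ v ∈ Set.Iic L, g v
      = Complex.exp ((-2 * L : ℝ)) * Complex.exp ((a + 2) * v) := by
    intro v hv
    have habs : |v - L| = L - v := by
      rw [abs_sub_comm]
      exact abs_of_nonneg (sub_nonneg.mpr hv)
    rw [hg]
    show (Real.exp (-2 * |v - L|) : ℂ) * Complex.exp (a * v) = _
    rw [habs, Complex.ofReal_exp, ← Complex.exp_add, ← Complex.exp_add]
    congr 1
    push_cast
    ring
  have hIoi : ∀ v ∈ Set.Ioi L, g v
      = Complex.exp ((2 * L : ℝ)) * Complex.exp ((a - 2) * v) := by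
    intro v hv
    have habs : |v - L| = v - L := abs_of_nonneg (sub_nonneg.mpr (le_of_lt hv))
    rw [hg]
    show (Real.exp (-2 * |v - L|) : ℂ) * Complex.exp (a * v) = _
    rw [habs, Complex.ofReal_exp, ← Complex.exp_add, ← Complex.exp_add]
    congr 1
    push_cast
    ring
  have hint1 : MeasureTheory.IntegrableOn g (Set.Iic L) :=
    MeasureTheory.IntegrableOn.congr_fun
      ((cexp_integrableOn_Iic h2a L).const_mul (Complex.exp ((-2 * L : ℝ))))
      (fun v hv => (hIic v hv).symm) measurableSet_Iic
  have hint2 : MeasureTheory.IntegrableOn g (Set.Ioi L) :=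
    MeasureTheory.IntegrableOn.congr_fun
      ((cexp_integrableOn_Ioi h2b L).const_mul (Complex.exp ((2 * L : ℝ))))
      (fun v hv => (hIoi v hv).symm) measurableSet_Ioi
  have hint : MeasureTheory.Integrable g := by
    have hu : MeasureTheory.IntegrableOn g (Set.Iic L ∪ Set.Ioi L) := hint1.union hint2
    rw [Set.Iic_union_Ioi] at hu
    exact MeasureTheory.integrableOn_univ.mp hu
  refine ⟨hint, ?_⟩
  have hsplit : ∫ v : ℝ, g v = (∫ v in Set.Iic L, g v) + ∫ v in Set.Ioi L, g v := by
    rw [← MeasureTheory.setIntegral_union (Set.Iic_disjoint_Ioi le_rfl) measurableSet_Ioi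
      hint1 hint2, Set.Iic_union_Ioi, MeasureTheory.setIntegral_univ]
  rw [hsplit, MeasureTheory.setIntegral_congr_fun measurableSet_Iic hIic,
    MeasureTheory.setIntegral_congr_fun measurableSet_Ioi hIoi,
    MeasureTheory.integral_const_mul, MeasureTheory.integral_const_mul,
    cexp_integral_Iic h2a L, cexp_integral_Ioi h2b L]
  have hxpow : (x:ℂ) ^ a = Complex.exp ((L:ℂ) * a) := by
    rw [Complex.cpow_def_of_ne_zero (by exact_mod_cast hx.ne' : (x:ℂ) ≠ 0)]
    congr 2
    exact (Complex.ofReal_log hx.le).symm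
  have e1 : Complex.exp ((-2 * L : ℝ)) * (Complex.exp ((a + 2) * L) / (a + 2))
      = Complex.exp ((L:ℂ) * a) / (a + 2) := by
    rw [← mul_div_assoc, ← Complex.exp_add]
    congr 2
    push_cast
    ring
  have e2 : Complex.exp ((2 * L : ℝ)) * (-Complex.exp ((a - 2) * L) / (a - 2))
      = Complex.exp ((L:ℂ) * a) / (2 - a) := by
    have hsub : -Complex.exp ((a - 2) * L) / (a - 2)
        = Complex.exp ((a - 2) * L) / (2 - a) := by
      rw [show a - 2 = -(2 - a) from by ring, div_neg, neg_div, neg_neg]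
    rw [hsub, ← mul_div_assoc, ← Complex.exp_add]
    congr 2
    push_cast
    ring
  rw [e1, e2, hxpow, Wweight]
  have h4 : (4:ℂ) - a^2 = (a + 2) * (2 - a) := by ring
  rw [h4]
  field_simp
  ring

end AuxKey


/-- For `x > 0` and `T ≥ 3`, `𝓕(x,T)` is a nonnegative real number and
`𝓕(1/x,T) = 𝓕(x,T)`. -/
theorem FF_nonneg_real_and_symm (x T : ℝ) (hx : 0 < x) (hT : 3 ≤ T) :
    (FF x T).im = 0 ∧ 0 ≤ (FF x T).re ∧ FF (1/x) T = FF x T := by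
  classical
  have hfin : (zeroBand T).Finite := zeroBand_finite hT
  have hT0 : (0:ℝ) < T := by linarith
  set s : Finset ℂ := hfin.toFinset with hsdef
  have hrep : ∀ y : ℝ, FF y T = ∑ ρ ∈ s, ∑ ρ' ∈ s,
      (zetaMult ρ : ℂ) * (zetaMult ρ' : ℂ) * (y:ℂ) ^ (ρ - ρ') * Wweight (ρ - ρ') := by
    intro y
    unfold FF
    rw [← Set.Finite.coe_toFinset hfin]
    simp only [finsum_mem_coe_finset]
    rw [hsdef]
  -- part 3 : symmetry in x ↦ 1/x
  have hWeven : ∀ a : ℂ, Wweight (-a) = Wweight a := by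
    intro a
    unfold Wweight
    rw [neg_sq]
  have hx0 : ((1/x : ℝ) : ℂ) ≠ 0 := by
    exact_mod_cast (one_div_pos.mpr hx).ne'
  have hx0' : ((x : ℝ) : ℂ) ≠ 0 := by exact_mod_cast hx.ne'
  have hinvpow : ∀ a : ℂ, ((1/x : ℝ):ℂ) ^ a = (x:ℂ) ^ (-a) := by
    intro a
    rw [Complex.cpow_def_of_ne_zero hx0, Complex.cpow_def_of_ne_zero hx0']
    congr 1
    rw [← Complex.ofReal_log (le_of_lt (one_div_pos.mpr hx)), ← Complex.ofReal_log hx.le,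
      one_div, Real.log_inv]
    push_cast
    ring
  have hsymm : FF (1/x) T = FF x T := by
    rw [hrep (1/x), hrep x, Finset.sum_comm]
    refine Finset.sum_congr rfl fun b _ => Finset.sum_congr rfl fun c _ => ?_
    rw [hinvpow (c - b)]
    rw [show -(c - b) = b - c from by ring]
    rw [show c - b = -(b - c) from by ring]
    rw [hWeven (b - c)]
    ring
  -- band membership facts
  have hband : ∀ ρ ∈ s, ρ ∈ zeroBand T := fun ρ h => (Set.Finite.mem_toFinset hfin).mp h
  have hσmem : ∀ ρ ∈ s, (1 - (starRingEnd ℂ) ρ) ∈ s := fun ρ h =>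
    (Set.Finite.mem_toFinset hfin).mpr (zeroBand_sigma hT0 (hband ρ h)).1
  have hσmult : ∀ ρ ∈ s, zetaMult (1 - (starRingEnd ℂ) ρ) = zetaMult ρ := fun ρ h =>
    (zeroBand_sigma hT0 (hband ρ h)).2
  have hσσ : ∀ ρ : ℂ, 1 - (starRingEnd ℂ) (1 - (starRingEnd ℂ) ρ) = ρ := by
    intro ρ
    rw [map_sub, map_one, Complex.conj_conj]
    ring
  have hrebound : ∀ ρ ∈ s, ∀ ρ' ∈ s, |(ρ - ρ').re| < 2 := by
    intro ρ h ρ' h'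
    obtain ⟨⟨_, h1, h2⟩, _, _⟩ := hband ρ h
    obtain ⟨⟨_, h3, h4⟩, _, _⟩ := hband ρ' h'
    rw [Complex.sub_re, abs_lt]
    constructor <;> linarith
  set S : ℝ → ℂ := fun v => ∑ ρ ∈ s, (zetaMult ρ : ℂ) * Complex.exp (ρ * v) with hSdef
  have hTv : ∀ v : ℝ, ∑ ρ' ∈ s, (zetaMult ρ' : ℂ) * Complex.exp (-(ρ' * v))
      = Complex.exp (-(v:ℂ)) * (starRingEnd ℂ) (S v) := by
    intro v
    have hB : ∑ ρ' ∈ s, (zetaMult ρ' : ℂ) * Complex.exp (-(ρ' * v))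
        = ∑ ρ' ∈ s, (zetaMult (1 - (starRingEnd ℂ) ρ') : ℂ)
            * Complex.exp (-((1 - (starRingEnd ℂ) ρ') * v)) := by
      refine (Finset.sum_nbij' (fun ρ => 1 - (starRingEnd ℂ) ρ)
        (fun ρ => 1 - (starRingEnd ℂ) ρ)
        (fun a ha => hσmem a ha) (fun a ha => hσmem a ha)
        (fun a _ => hσσ a) (fun a _ => hσσ a) (fun a _ => rfl)).symm
    rw [hB]
    have hconjS : (starRingEnd ℂ) (S v) = ∑ ρ' ∈ s, (zetaMult ρ' : ℂ)
        * Complex.exp ((starRingEnd ℂ) ρ' * v) := by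
      simp only [hSdef]
      rw [map_sum]
      refine Finset.sum_congr rfl fun ρ' _ => ?_
      rw [map_mul, map_natCast, ← Complex.exp_conj, map_mul, Complex.conj_ofReal]
    rw [hconjS, Finset.mul_sum]
    refine Finset.sum_congr rfl fun ρ' hρ' => ?_
    rw [hσmult ρ' hρ', mul_left_comm, ← Complex.exp_add]
    congr 2
    ring
  have hpt : ∀ v : ℝ, (∑ ρ ∈ s, ∑ ρ' ∈ s, ((zetaMult ρ : ℂ) * (zetaMult ρ' : ℂ))
      * ((Real.exp (-2 * |v - Real.log x|) : ℂ) * Complex.exp ((ρ - ρ') * v)))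
      = ((Real.exp (-2 * |v - Real.log x|) * Real.exp (-v) * Complex.normSq (S v) : ℝ) : ℂ) := by
    intro v
    have expand : ∀ ρ ρ' : ℂ, Complex.exp ((ρ - ρ') * v)
        = Complex.exp (ρ * v) * Complex.exp (-(ρ' * v)) := by
      intro ρ ρ'
      rw [← Complex.exp_add]
      congr 1
      ring
    calc (∑ ρ ∈ s, ∑ ρ' ∈ s, ((zetaMult ρ : ℂ) * (zetaMult ρ' : ℂ))
        * ((Real.exp (-2 * |v - Real.log x|) : ℂ) * Complex.exp ((ρ - ρ') * v)))
        = (Real.exp (-2 * |v - Real.log x|) : ℂ) * ∑ ρ ∈ s, ∑ ρ' ∈ s,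
            ((zetaMult ρ : ℂ) * Complex.exp (ρ * v))
              * ((zetaMult ρ' : ℂ) * Complex.exp (-(ρ' * v))) := by
          rw [Finset.mul_sum]
          refine Finset.sum_congr rfl fun ρ _ => ?_
          rw [Finset.mul_sum]
          refine Finset.sum_congr rfl fun ρ' _ => ?_
          rw [expand]
          ring
      _ = (Real.exp (-2 * |v - Real.log x|) : ℂ)
            * (S v * ∑ ρ' ∈ s, (zetaMult ρ' : ℂ) * Complex.exp (-(ρ' * v))) := by
          simp only [hSdef]
          rw [← Finset.sum_mul_sum]
      _ = (Real.exp (-2 * |v - Real.log x|) : ℂ)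
            * (S v * (Complex.exp (-(v:ℂ)) * (starRingEnd ℂ) (S v))) := by
          rw [hTv v]
      _ = ((Real.exp (-2 * |v - Real.log x|) * Real.exp (-v) * Complex.normSq (S v) : ℝ) : ℂ) := by
          rw [mul_left_comm (S v), Complex.mul_conj]
          rw [show (-(v:ℂ)) = ((-v : ℝ) : ℂ) from by push_cast; ring, ← Complex.ofReal_exp]
          push_cast
          ring
  have hFF : FF x T = ∫ v : ℝ,
      ((Real.exp (-2 * |v - Real.log x|) * Real.exp (-v) * Complex.normSq (S v) : ℝ) : ℂ) := by
    rw [hrep x]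
    have step1 : ∀ ρ ∈ s, ∀ ρ' ∈ s,
        (zetaMult ρ : ℂ) * (zetaMult ρ' : ℂ) * (x:ℂ) ^ (ρ - ρ') * Wweight (ρ - ρ')
        = ∫ v : ℝ, ((zetaMult ρ : ℂ) * (zetaMult ρ' : ℂ))
            * ((Real.exp (-2 * |v - Real.log x|) : ℂ) * Complex.exp ((ρ - ρ') * v)) := by
      intro ρ hρ ρ' hρ'
      rw [MeasureTheory.integral_const_mul, (key_integral hx (hrebound ρ hρ ρ' hρ')).2]
      ring
    calc (∑ ρ ∈ s, ∑ ρ' ∈ s,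
          (zetaMult ρ : ℂ) * (zetaMult ρ' : ℂ) * (x:ℂ) ^ (ρ - ρ') * Wweight (ρ - ρ'))
        = ∑ ρ ∈ s, ∑ ρ' ∈ s, ∫ v : ℝ, ((zetaMult ρ : ℂ) * (zetaMult ρ' : ℂ))
            * ((Real.exp (-2 * |v - Real.log x|) : ℂ) * Complex.exp ((ρ - ρ') * v)) :=
          Finset.sum_congr rfl fun ρ hρ => Finset.sum_congr rfl fun ρ' hρ' => step1 ρ hρ ρ' hρ'
      _ = ∑ ρ ∈ s, ∫ v : ℝ, ∑ ρ' ∈ s, ((zetaMult ρ : ℂ) * (zetaMult ρ' : ℂ))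
            * ((Real.exp (-2 * |v - Real.log x|) : ℂ) * Complex.exp ((ρ - ρ') * v)) := by
          refine Finset.sum_congr rfl fun ρ hρ => ?_
          rw [MeasureTheory.integral_finset_sum s (fun ρ' hρ' =>
            ((key_integral hx (hrebound ρ hρ ρ' hρ')).1.const_mul _))]
      _ = ∫ v : ℝ, ∑ ρ ∈ s, ∑ ρ' ∈ s, ((zetaMult ρ : ℂ) * (zetaMult ρ' : ℂ))
            * ((Real.exp (-2 * |v - Real.log x|) : ℂ) * Complex.exp ((ρ - ρ') * v)) := by
          rw [MeasureTheory.integral_finset_sum s (fun ρ hρ =>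
            MeasureTheory.integrable_finset_sum s (fun ρ' hρ' =>
              ((key_integral hx (hrebound ρ hρ ρ' hρ')).1.const_mul _)))]
      _ = ∫ v : ℝ, ((Real.exp (-2 * |v - Real.log x|) * Real.exp (-v)
            * Complex.normSq (S v) : ℝ) : ℂ) :=
          MeasureTheory.integral_congr_ae (Filter.Eventually.of_forall fun v => hpt v)
  have hcast : (∫ v : ℝ,
      ((Real.exp (-2 * |v - Real.log x|) * Real.exp (-v) * Complex.normSq (S v) : ℝ) : ℂ))
      = (((∫ v : ℝ, Real.exp (-2 * |v - Real.log x|) * Real.exp (-v)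
          * Complex.normSq (S v)) : ℝ) : ℂ) := integral_ofReal
  refine ⟨?_, ?_, hsymm⟩
  · rw [hFF, hcast]
    exact Complex.ofReal_im _
  · rw [hFF, hcast, Complex.ofReal_re]
    refine MeasureTheory.integral_nonneg fun v => ?_
    exact mul_nonneg (mul_nonneg (Real.exp_pos _).le (Real.exp_pos _).le)
      (Complex.normSq_nonneg _)
end

section
/- Let b > 0 and let z = x + iy be a complex number with x, y real and |y| < b. Then ∫_{−∞}^{∞} cos(2πzt)/cosh(2πbt) dt = 1/(2b cosh(πz/(2b))). -/
open Filter Topology MeasureTheory Set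

private lemma cpow_pos_eq {x : ℝ} (hx : 0 < x) (w : ℂ) :
    (x : ℂ) ^ w = Complex.exp (w * Real.log x) := by
  rw [Complex.cpow_def_of_ne_zero (by exact_mod_cast hx.ne'), ← Complex.ofReal_log hx.le,
    mul_comm]

private lemma integrable_exp_neg_abs {c : ℝ} (hc : 0 < c) :
    MeasureTheory.Integrable (fun s : ℝ => Real.exp (-c * |s|)) := by
  set f : ℝ → ℝ := fun s => Real.exp (-c * |s|) with hf
  have h1 : IntegrableOn f (Ioi 0) :=
    (exp_neg_integrableOn_Ioi 0 hc).congr_fun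
      (fun s hs => by simp [hf, abs_of_pos (mem_Ioi.mp hs)]) measurableSet_Ioi
  have h1' : IntegrableOn f (Ici 0) := Iff.mpr integrableOn_Ici_iff_integrableOn_Ioi h1
  have h3 : Integrable ((Ici (0:ℝ)).indicator f) :=
    (integrable_indicator_iff measurableSet_Ici).mpr h1'
  have h4 := (integrable_comp_mul_left_iff ((Ici (0:ℝ)).indicator f)
    (by norm_num : (-1:ℝ) ≠ 0)).mpr h3
  have h2 : IntegrableOn f (Iic 0) := by
    rw [← integrable_indicator_iff measurableSet_Iic]
    refine h4.congr (ae_of_all _ fun x => ?_)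
    simp only [neg_one_mul]
    by_cases hx : x ≤ 0 <;>
      simp [indicator, hf, hx, neg_nonneg, not_le.mp, abs_neg, mem_Ici, mem_Iic,
        le_of_lt, not_le]
  have := h2.union h1
  rwa [Iic_union_Ioi, integrableOn_univ] at this

private lemma beta_value (c : ℂ) (hc0 : 0 < c.re) (hc1 : c.re < 1) :
    Complex.betaIntegral c (1 - c) = ↑Real.pi / Complex.sin (↑Real.pi * c) := by
  have h2 : 0 < (1 - c).re := by
    simp only [Complex.sub_re, Complex.one_re]; linarith
  have h := Complex.Gamma_mul_Gamma_eq_betaIntegral hc0 h2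
  rw [show c + (1 - c) = 1 by ring, Complex.Gamma_one, one_mul,
    Complex.Gamma_mul_Gamma_one_sub] at h
  exact h.symm

private lemma integral_cpow_div_one_add (c : ℂ) (hc0 : 0 < c.re) (hc1 : c.re < 1) :
    (∫ u in Ioi (0:ℝ), (u:ℂ) ^ (c - 1) / (1 + (u:ℂ)))
      = ↑Real.pi / Complex.sin (↑Real.pi * c) := by
  have himg : (fun y : ℝ => y / (1 - y)) '' Ioo 0 1 = Ioi 0 := by
    ext u
    constructor
    · rintro ⟨y, ⟨hy0, hy1⟩, rfl⟩
      exact mem_Ioi.mpr (div_pos hy0 (by linarith))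
    · intro hu
      have hu' : (0:ℝ) < u := mem_Ioi.mp hu
      refine ⟨u / (1 + u), ⟨div_pos hu' (by linarith), ?_⟩, ?_⟩
      · rw [div_lt_one (by linarith)]; linarith
      · field_simp; ring
  have hderiv : ∀ y ∈ Ioo (0:ℝ) 1,
      HasDerivWithinAt (fun y : ℝ => y / (1 - y)) (((1 - y)^2)⁻¹) (Ioo 0 1) y := by
    intro y hy
    have h1y : (1:ℝ) - y ≠ 0 := by have h2 := hy.2; intro h; nlinarith
    have := (hasDerivAt_id y).div ((hasDerivAt_id y).const_sub 1) h1y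
    refine (this.congr_deriv ?_).hasDerivWithinAt
    simp only [id]
    ring
  have hinj : InjOn (fun y : ℝ => y / (1 - y)) (Ioo 0 1) := by
    intro y1 h1 y2 h2 heq
    have n1 : (1:ℝ) - y1 ≠ 0 := by have := h1.2; intro h; linarith [h1.2, (by linarith : y1 = 1)]
    have n2 : (1:ℝ) - y2 ≠ 0 := by intro h; linarith [h2.2, (by linarith : y2 = 1)]
    field_simp at heq
    nlinarith [heq]
  calc (∫ u in Ioi (0:ℝ), (u:ℂ) ^ (c - 1) / (1 + (u:ℂ)))
      = ∫ u in (fun y : ℝ => y / (1 - y)) '' Ioo 0 1, (u:ℂ) ^ (c - 1) / (1 + (u:ℂ)) := by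
        rw [himg]
    _ = ∫ y in Ioo (0:ℝ) 1, |((1 - y)^2)⁻¹| •
          (((y / (1 - y) : ℝ) : ℂ) ^ (c - 1) / (1 + ((y / (1 - y) : ℝ) : ℂ))) :=
        integral_image_eq_integral_abs_deriv_smul measurableSet_Ioo hderiv hinj _
    _ = ∫ y in Ioo (0:ℝ) 1, (y:ℂ) ^ (c - 1) * (1 - (y:ℂ)) ^ ((1 - c) - 1) := by
        refine setIntegral_congr_fun measurableSet_Ioo (fun y hy => ?_)
        obtain ⟨hy0, hy1⟩ := hy
        have h1y : (0:ℝ) < 1 - y := by linarith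
        have hq : (0:ℝ) < y / (1 - y) := div_pos hy0 h1y
        set A := Real.log y with hA
        set B := Real.log (1 - y) with hB'
        have hB : ((1 - y : ℝ) : ℂ) = Complex.exp B := by
          rw [← Complex.ofReal_exp, Real.exp_log h1y]
        have e1 : ((y / (1 - y) : ℝ) : ℂ) ^ (c - 1)
            = Complex.exp ((c - 1) * ((A : ℂ) - (B : ℂ))) := by
          rw [cpow_pos_eq hq, Real.log_div hy0.ne' h1y.ne']
          push_cast
          ring_nf
          rfl
        have e2 : (1 : ℂ) + ((y / (1 - y) : ℝ) : ℂ) = (Complex.exp (B : ℂ))⁻¹ := by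
          have h3 : (1:ℝ) + y / (1 - y) = (1 - y)⁻¹ := by field_simp; ring
          rw [← hB, show (1 : ℂ) + ((y / (1 - y) : ℝ) : ℂ) = (((1 + y / (1-y) : ℝ)) : ℂ) by
            push_cast; ring, h3]
          push_cast
          ring
        have e3 : ((|((1 - y)^2)⁻¹| : ℝ) : ℂ) = Complex.exp (-(2 * (B:ℂ))) := by
          rw [abs_of_pos (by positivity), Complex.ofReal_inv, Complex.ofReal_pow, hB,
            ← Complex.exp_nat_mul, ← Complex.exp_neg]
          norm_num
        have e4 : (y:ℂ) ^ (c - 1) = Complex.exp ((c - 1) * (A:ℂ)) := cpow_pos_eq hy0 _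
        have e5 : (1 - (y:ℂ)) ^ ((1 - c) - 1) = Complex.exp (((1 - c) - 1) * (B:ℂ)) := by
          rw [show (1 - (y:ℂ)) = (((1 - y : ℝ)) : ℂ) by push_cast; ring, cpow_pos_eq h1y]
        rw [Complex.real_smul, e1, e2, e3, e4, e5, div_eq_mul_inv, inv_inv, ← Complex.exp_add,
          ← Complex.exp_add, ← Complex.exp_add]
        congr 1
        ring
    _ = Complex.betaIntegral c (1 - c) := by
        rw [Complex.betaIntegral, intervalIntegral.integral_of_le zero_le_one,
          integral_Ioc_eq_integral_Ioo]
    _ = ↑Real.pi / Complex.sin (↑Real.pi * c) := beta_value c hc0 hc1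

private lemma cosh_ge {s : ℝ} : Real.exp |s| / 2 ≤ Real.cosh s := by
  rw [Real.cosh_eq, div_le_div_iff_of_pos_right two_pos]
  rcases abs_cases s with ⟨h, _⟩ | ⟨h, _⟩ <;> rw [h] <;>
    nlinarith [Real.exp_pos s, Real.exp_pos (-s)]

private lemma integrable_G {a : ℂ} (ha : |a.im| < 1) :
    MeasureTheory.Integrable
      (fun s : ℝ => Complex.exp (Complex.I * a * s) / Complex.cosh s) := by
  have hcont : Continuous (fun s : ℝ => Complex.exp (Complex.I * a * s) / Complex.cosh s) := by
    apply Continuous.div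
    · exact Complex.continuous_exp.comp (by continuity)
    · exact Complex.continuous_cosh.comp Complex.continuous_ofReal
    · intro s
      rw [← Complex.ofReal_cosh]
      exact_mod_cast (Real.cosh_pos s).ne'
  refine ((integrable_exp_neg_abs (c := 1 - |a.im|) (by linarith)).const_mul 2).mono'
    hcont.aestronglyMeasurable (ae_of_all _ fun s => ?_)
  rw [norm_div]
  have h1 : ‖Complex.exp (Complex.I * a * s)‖ = Real.exp (-(a.im * s)) := by
    rw [Complex.norm_exp]
    congr 1
    simp [Complex.mul_re, Complex.mul_im]
  have h2 : ‖Complex.cosh (s:ℂ)‖ = Real.cosh s := by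
    rw [← Complex.ofReal_cosh, Complex.norm_real, Real.norm_eq_abs, abs_of_pos (Real.cosh_pos s)]
  rw [h1, h2]
  calc Real.exp (-(a.im * s)) / Real.cosh s
      ≤ Real.exp (|a.im| * |s|) / (Real.exp |s| / 2) := by
        apply div_le_div₀ (Real.exp_pos _).le
        · exact Real.exp_le_exp.mpr ((neg_le_abs _).trans (by rw [abs_mul]))
        · positivity
        · exact cosh_ge
    _ = 2 * Real.exp (-(1 - |a.im|) * |s|) := by
        rw [show -(1 - |a.im|) * |s| = |a.im| * |s| + -|s| by ring, Real.exp_add,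
          Real.exp_neg]
        field_simp

private lemma integral_exp_div_cosh {a : ℂ} (ha : |a.im| < 1) :
    (∫ s : ℝ, Complex.exp (Complex.I * a * s) / Complex.cosh s)
      = ↑Real.pi / Complex.cosh (↑Real.pi * a / 2) := by
  set c : ℂ := (1 + Complex.I * a) / 2 with hc
  have hIa : (Complex.I * a).re = -a.im := by simp [Complex.mul_re]
  have hcre : c.re = (1 - a.im) / 2 := by
    rw [hc, Complex.div_re]
    simp [Complex.add_re, hIa, Complex.normSq]
    ring
  have habs := abs_lt.mp ha
  have hc0 : 0 < c.re := by rw [hcre]; linarith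
  have hc1 : c.re < 1 := by rw [hcre]; linarith
  -- log substitution
  have himg_log : Real.log '' Ioi 0 = (univ : Set ℝ) := by
    ext x
    simp only [mem_image, mem_Ioi, mem_univ, iff_true]
    exact ⟨Real.exp x, Real.exp_pos x, Real.log_exp x⟩
  have hderiv_log : ∀ x ∈ Ioi (0:ℝ), HasDerivWithinAt Real.log x⁻¹ (Ioi 0) x :=
    fun x hx => (Real.hasDerivAt_log (mem_Ioi.mp hx).ne').hasDerivWithinAt
  have hinj_log : InjOn Real.log (Ioi 0) := fun x hx y hy hxy => by
    rw [← Real.exp_log (mem_Ioi.mp hx), hxy, Real.exp_log (mem_Ioi.mp hy)]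
  -- square substitution
  have himg_sq : (fun x : ℝ => x ^ 2) '' Ioi 0 = Ioi 0 := by
    ext u
    simp only [mem_image, mem_Ioi]
    constructor
    · rintro ⟨x, hx, rfl⟩; positivity
    · intro hu
      exact ⟨Real.sqrt u, Real.sqrt_pos.mpr hu, Real.sq_sqrt hu.le⟩
  have hderiv_sq : ∀ x ∈ Ioi (0:ℝ),
      HasDerivWithinAt (fun x : ℝ => x ^ 2) (2 * x) (Ioi 0) x := by
    intro x hx
    have := hasDerivAt_pow 2 x
    norm_num at this
    exact this.hasDerivWithinAt
  have hinj_sq : InjOn (fun x : ℝ => x ^ 2) (Ioi 0) := by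
    intro x hx y hy h
    simp only at h
    rw [← Real.sqrt_sq (mem_Ioi.mp hx).le, h, Real.sqrt_sq (mem_Ioi.mp hy).le]
  calc (∫ s : ℝ, Complex.exp (Complex.I * a * s) / Complex.cosh s)
      = ∫ s in Real.log '' Ioi 0, Complex.exp (Complex.I * a * s) / Complex.cosh s := by
        rw [himg_log, setIntegral_univ]
    _ = ∫ x in Ioi (0:ℝ), |x⁻¹| •
          (Complex.exp (Complex.I * a * (Real.log x : ℂ)) / Complex.cosh (Real.log x : ℂ)) :=
        integral_image_eq_integral_abs_deriv_smul measurableSet_Ioi hderiv_log hinj_log _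
    _ = ∫ x in Ioi (0:ℝ), 2 * Complex.exp (Complex.I * a * (Real.log x : ℂ)) / (1 + (x:ℂ)^2) := by
        refine setIntegral_congr_fun measurableSet_Ioi (fun x hx => ?_)
        have hx0 : (0:ℝ) < x := mem_Ioi.mp hx
        have hch : Complex.cosh ((Real.log x : ℝ) : ℂ) = ((((x + x⁻¹)/2 : ℝ)) : ℂ) := by
          rw [← Complex.ofReal_cosh, Real.cosh_log hx0]
        rw [Complex.real_smul, hch, abs_of_pos (inv_pos.mpr hx0)]
        have hxC : (x:ℂ) ≠ 0 := by exact_mod_cast hx0.ne'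
        have h2 : ((((x + x⁻¹)/2 : ℝ)) : ℂ) ≠ 0 := by
          have : (0:ℝ) < (x + x⁻¹)/2 := by positivity
          exact_mod_cast this.ne'
        have h1x2 : (1:ℂ) + (x:ℂ)^2 ≠ 0 := by
          intro h
          have : ((1 + x^2 : ℝ) : ℂ) = 0 := by push_cast; linear_combination h
          have h3 : (1 + x^2 : ℝ) = 0 := by exact_mod_cast this
          nlinarith
        have hx3 : (x:ℂ) + (x:ℂ)^3 ≠ 0 := by
          have : (x:ℂ) + (x:ℂ)^3 = (x:ℂ) * (1 + (x:ℂ)^2) := by ring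
          rw [this]
          exact mul_ne_zero hxC h1x2
        push_cast
        field_simp
        ring_nf
        field_simp
        ring
    _ = ∫ x in Ioi (0:ℝ), |2 * x| •
          ((((x^2 : ℝ)) : ℂ) ^ (c - 1) / (1 + (((x^2 : ℝ)) : ℂ))) := by
        refine setIntegral_congr_fun measurableSet_Ioi (fun x hx => ?_)
        have hx0 : (0:ℝ) < x := mem_Ioi.mp hx
        have hx2 : (0:ℝ) < x ^ 2 := by positivity
        have e1 : (((x^2 : ℝ)) : ℂ) ^ (c - 1)
            = Complex.exp ((Complex.I * a - 1) * (Real.log x : ℂ)) := by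
          rw [cpow_pos_eq hx2, Real.log_pow]
          congr 1
          have : (c - 1) * 2 = Complex.I * a - 1 := by rw [hc]; ring
          push_cast
          linear_combination (Real.log x : ℂ) * this
        have e2 : ((x:ℝ) : ℂ) = Complex.exp ((Real.log x : ℝ) : ℂ) := by
          rw [← Complex.ofReal_exp, Real.exp_log hx0]
        rw [Complex.real_smul, e1, abs_of_pos (by positivity : (0:ℝ) < 2 * x)]
        push_cast
        rw [e2]
        have e3 : Complex.exp (Complex.I * a * ((Real.log x : ℝ) : ℂ))
            = Complex.exp ((Real.log x : ℝ) : ℂ)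
              * Complex.exp ((Complex.I * a - 1) * ((Real.log x : ℝ) : ℂ)) := by
          rw [← Complex.exp_add]; congr 1; ring
        rw [e3]
        ring
    _ = ∫ u in Ioi (0:ℝ), (u:ℂ) ^ (c - 1) / (1 + (u:ℂ)) := by
        conv_rhs => rw [← himg_sq]
        rw [integral_image_eq_integral_abs_deriv_smul measurableSet_Ioi hderiv_sq hinj_sq]
    _ = ↑Real.pi / Complex.sin (↑Real.pi * c) := integral_cpow_div_one_add c hc0 hc1
    _ = ↑Real.pi / Complex.cosh (↑Real.pi * a / 2) := by
        congr 1
        have : (Real.pi : ℂ) * c = ↑Real.pi / 2 - (-(↑Real.pi * a / 2) * Complex.I) := by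
          rw [hc]; ring
        rw [this, Complex.sin_pi_div_two_sub, neg_mul, Complex.cos_neg, Complex.cos_mul_I]

/-- For `b > 0` and `z = x + iy` with `|y| < b`,
`∫ cos(2πzt)/cosh(2πbt) dt = 1/(2b cosh(πz/(2b)))`. -/
theorem integral_cos_div_cosh (b : ℝ) (hb : 0 < b) (z : ℂ) (hz : |z.im| < b) :
    (∫ t : ℝ, Complex.cos (2 * Real.pi * z * t) / Complex.cosh (2 * Real.pi * b * t))
      = 1 / (2 * b * Complex.cosh (Real.pi * z / (2 * b))) := by
  have hbne : (b:ℂ) ≠ 0 := by exact_mod_cast hb.ne'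
  set a : ℂ := z / b with haDef
  have haim : |a.im| < 1 := by
    rw [haDef, Complex.div_ofReal_im, abs_div, abs_of_pos hb, div_lt_one hb]
    exact hz
  set G : ℝ → ℂ := fun s => Complex.exp (Complex.I * a * s) / Complex.cosh s with hG
  set F : ℝ → ℂ := fun s => Complex.cos (a * s) / Complex.cosh s with hF
  have hGint : Integrable G := integrable_G haim
  have hGneg : Integrable (fun s : ℝ => G (-s)) := by
    have := (integrable_comp_mul_left_iff G (by norm_num : (-1:ℝ) ≠ 0)).mpr hGint
    simpa using this
  have hFG : ∀ s : ℝ, F s = (G s + G (-s)) / 2 := by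
    intro s
    rw [hF, hG]
    simp only
    have key : Complex.cos (a * (s:ℂ))
        = (Complex.exp (Complex.I * a * (s:ℂ)) + Complex.exp (Complex.I * a * (-s:ℂ))) / 2 := by
      rw [show Complex.cos (a * (s:ℂ))
          = (Complex.exp (a * (s:ℂ) * Complex.I) + Complex.exp (-(a * (s:ℂ)) * Complex.I)) / 2
          from rfl]
      rw [show a * (s:ℂ) * Complex.I = Complex.I * a * (s:ℂ) by ring,
        show -(a * (s:ℂ)) * Complex.I = Complex.I * a * (-s:ℂ) by ring]
    rw [key]
    push_cast
    rw [Complex.cosh_neg]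
    ring
  have negeq : (∫ s : ℝ, G (-s)) = ∫ s : ℝ, G s := by
    have := MeasureTheory.Measure.integral_comp_mul_left G (-1)
    simp only [neg_one_mul] at this
    rw [this]
    norm_num
  have hFeqG : (∫ s : ℝ, F s) = ∫ s : ℝ, G s := by
    calc (∫ s : ℝ, F s) = ∫ s : ℝ, (G s + G (-s)) / 2 := by
          exact integral_congr_ae (ae_of_all _ hFG)
      _ = ((∫ s : ℝ, G s) + ∫ s : ℝ, G (-s)) / 2 := by
          rw [integral_div, integral_add hGint hGneg]
      _ = ∫ s : ℝ, G s := by rw [negeq]; ring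
  have hFcomp : ∀ t : ℝ, Complex.cos (2 * Real.pi * z * t) / Complex.cosh (2 * Real.pi * b * t)
      = F (2 * Real.pi * b * t) := by
    intro t
    rw [hF]
    simp only
    push_cast
    congr 2
    rw [haDef]
    field_simp
  calc (∫ t : ℝ, Complex.cos (2 * Real.pi * z * t) / Complex.cosh (2 * Real.pi * b * t))
      = ∫ t : ℝ, F (2 * Real.pi * b * t) := integral_congr_ae (ae_of_all _ hFcomp)
    _ = |(2 * Real.pi * b)⁻¹| • ∫ s : ℝ, F s :=
        MeasureTheory.Measure.integral_comp_mul_left F (2 * Real.pi * b)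
    _ = 1 / (2 * b * Complex.cosh (Real.pi * z / (2 * b))) := by
        rw [hFeqG, integral_exp_div_cosh haim,
          abs_of_pos (by positivity : (0:ℝ) < (2 * Real.pi * b)⁻¹)]
        have harg : (Real.pi : ℂ) * a / 2 = (Real.pi : ℂ) * z / (2 * (b:ℂ)) := by
          rw [haDef]
          field_simp
        rw [Complex.real_smul, harg]
        have hco : ((((2 * Real.pi * b)⁻¹ : ℝ)) : ℂ) * (Real.pi : ℂ) = 1 / (2 * (b:ℂ)) := by
          push_cast
          have hpi : (Real.pi : ℂ) ≠ 0 := by exact_mod_cast Real.pi_ne_zero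
          field_simp
        rw [(mul_div_assoc _ _ _).symm, hco, div_div]
end
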